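/- Let x be a nonempty word and for each i ≥ 0 let Ztype[i] denote the Zimin type of the prefix x[1..i] (with Ztype[0] = 0). Then for every i with 1 ≤ i ≤ |x|, Ztype[i] = 1 + Ztype[j], where j = |ShortBord(x[1..i])| is the length of the longest short border of x[1..i]. -/

import Mathlib

open List Filter

/-- The Zimin pattern `Z_k` as a word over variables `0, 1, ..., k-1`
(`Z_0` is empty, `Z_{k+1} = Z_k · x_{k+1} · Z_k`). -/
def ziminWord : ℕ → List ℕ
  | 0 => []
  | k + 1 => ziminWord k ++ k :: ziminWord k

/-- `w` is the image of the Zimin pattern `Z_k` under a non-erasing morphism. -/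
def IsZiminImage {α : Type*} (k : ℕ) (w : List α) : Prop :=
  ∃ h : ℕ → List α, (∀ i, h i ≠ []) ∧ w = (ziminWord k).flatMap h

/-- The Zimin type of `w`: the maximum `k` such that `w` is an image of `Z_k`
under a non-erasing morphism (0 for the empty word). -/
noncomputable def ziminType {α : Type*} (w : List α) : ℕ :=
  sSup {k | IsZiminImage k w}

/-- The Zimin pattern `Z_k` embeds in `w`: some factor of `w` is an image of `Z_k`. -/
def ziminEmbeds {α : Type*} (k : ℕ) (w : List α) : Prop :=
  ∃ u : List α, u <:+: w ∧ IsZiminImage k u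

/-- Length of the longest border (proper prefix that is also a proper suffix) of `w`. -/
noncomputable def bordLen {α : Type*} (w : List α) : ℕ :=
  sSup {j | w.take j <:+ w ∧ j < w.length}

/-- Length of the longest short border (border of length `< |w|/2`) of `w`. -/
noncomputable def shortBordLen {α : Type*} (w : List α) : ℕ :=
  sSup {j | w.take j <:+ w ∧ 2 * j < w.length}

/-- The longest border of `w`. -/
noncomputable def bord {α : Type*} (w : List α) : List α := w.take (bordLen w)

/-- The longest short border of `w`. -/
noncomputable def shortBord {α : Type*} (w : List α) : List α := w.take (shortBordLen w)

/-- The Fibonacci words over `Bool` (`a = false`, `b = true`), with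
`fibWord 0 = F_0 = a`, `fibWord 1 = F_1 = F_0 F_{-1} = ab`, `F_{n} = F_{n-1} F_{n-2}`. -/
def fibWord : ℕ → List Bool
  | 0 => [false]
  | 1 => [false, true]
  | n + 2 => fibWord (n + 1) ++ fibWord n

/-- The Fibonacci numbers `Φ_n = |F_n|` (`Φ_0 = 1, Φ_1 = 2, Φ_2 = 3, ...`). -/
def Phi (n : ℕ) : ℕ := (fibWord n).length

/-- The infinite Fibonacci word `F_∞` (0-indexed letters). -/
def fibInf (i : ℕ) : Bool := (fibWord (i + 2)).getD i false

/-- The prefix `F_∞[1..n]` of the infinite Fibonacci word. -/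
def fibPrefix (n : ℕ) : List Bool := (List.range n).map fibInf


section Aux

variable {α : Type*}

lemma ziminWord_mem_lt {k a : ℕ} (h : a ∈ ziminWord k) : a < k := by
  induction k with
  | zero => simp [ziminWord] at h
  | succ n ih =>
    simp only [ziminWord, List.mem_append, List.mem_cons] at h
    rcases h with h | h | h
    · exact (ih h).trans (Nat.lt_succ_self n)
    · omega
    · exact (ih h).trans (Nat.lt_succ_self n)

lemma le_length_ziminWord (k : ℕ) : k ≤ (ziminWord k).length := by
  induction k with
  | zero => simp
  | succ n ih => simp [ziminWord]; omega

lemma length_le_length_flatMap (l : List ℕ) (h : ℕ → List α) (hne : ∀ i, h i ≠ []) :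
    l.length ≤ (l.flatMap h).length := by
  induction l with
  | nil => simp
  | cons a t ih =>
    have : 1 ≤ (h a).length := List.length_pos_iff.mpr (hne a)
    simp only [List.flatMap_cons, List.length_append, List.length_cons]
    omega

lemma IsZiminImage.le_length {k : ℕ} {w : List α} (h : IsZiminImage k w) : k ≤ w.length := by
  obtain ⟨f, hf, rfl⟩ := h
  exact (le_length_ziminWord k).trans (length_le_length_flatMap _ _ hf)

lemma bddAbove_zimin (w : List α) : BddAbove {k | IsZiminImage k w} :=
  ⟨w.length, fun _ hk => hk.le_length⟩

lemma isZiminImage_one {w : List α} (hw : w ≠ []) : IsZiminImage 1 w :=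
  ⟨fun _ => w, fun _ => hw, by simp [ziminWord]⟩

lemma flatMap_congr_mem {l : List ℕ} {f g : ℕ → List α} (h : ∀ a ∈ l, f a = g a) :
    l.flatMap f = l.flatMap g := by
  induction l with
  | nil => rfl
  | cons a t ih =>
    simp only [List.flatMap_cons, h a List.mem_cons_self,
      ih fun b hb => h b (List.mem_cons_of_mem a hb)]

lemma isZiminImage_succ_iff {k : ℕ} {w : List α} :
    IsZiminImage (k + 1) w ↔ ∃ u m, IsZiminImage k u ∧ m ≠ [] ∧ w = u ++ m ++ u := by
  constructor
  · rintro ⟨f, hf, rfl⟩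
    refine ⟨(ziminWord k).flatMap f, f k, ⟨f, hf, rfl⟩, hf k, ?_⟩
    simp [ziminWord, List.flatMap_append, List.flatMap_cons, List.append_assoc]
  · rintro ⟨u, m, ⟨g, hg, rfl⟩, hm, rfl⟩
    refine ⟨fun i => if i = k then m else g i, fun i => by dsimp; split <;> [exact hm; exact hg i], ?_⟩
    have hcongr : (ziminWord k).flatMap (fun i => if i = k then m else g i)
        = (ziminWord k).flatMap g :=
      flatMap_congr_mem fun a ha => if_neg (Nat.ne_of_lt (ziminWord_mem_lt ha))
    simp [ziminWord, List.flatMap_append, List.flatMap_cons, hcongr, List.append_assoc]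

lemma exists_middle {a v : List α} (hp : a <+: v) (hs : a <:+ v)
    (hlen : 2 * a.length < v.length) : ∃ m, m ≠ [] ∧ v = a ++ m ++ a := by
  obtain ⟨t, rfl⟩ := hp
  have hal : a.length ≤ t.length := by simp at hlen; omega
  have hst : a <:+ t := List.suffix_of_suffix_length_le hs ⟨a, rfl⟩ hal
  obtain ⟨m, rfl⟩ := hst
  refine ⟨m, ?_, by simp [List.append_assoc]⟩
  intro hmnil
  subst hmnil
  simp at hlen
  omega

lemma isZiminImage_of_border {k : ℕ} {u v : List α}
    (hp : u <+: v) (hs : u <:+ v) (h : IsZiminImage (k + 1) u) : IsZiminImage (k + 1) v := by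
  rw [isZiminImage_succ_iff] at h ⊢
  obtain ⟨a, m, ha, hm, rfl⟩ := h
  have hap : a <+: v := List.IsPrefix.trans ⟨m ++ a, by simp [List.append_assoc]⟩ hp
  have has : a <:+ v := List.IsSuffix.trans ⟨a ++ m, by simp [List.append_assoc]⟩ hs
  have hlen : 2 * a.length < v.length := by
    have h1 : (a ++ m ++ a).length ≤ v.length := hp.length_le
    have h2 : 1 ≤ m.length := List.length_pos_iff.mpr hm
    simp only [List.length_append] at h1
    omega
  obtain ⟨m', hm', rfl⟩ := exists_middle hap has hlen
  exact ⟨a, m', ha, hm', rfl⟩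

lemma isZiminImage_ziminType {w : List α} (hw : w ≠ []) : IsZiminImage (ziminType w) w :=
  Nat.sSup_mem ⟨1, isZiminImage_one hw⟩ (bddAbove_zimin w)

lemma le_ziminType {k : ℕ} {w : List α} (h : IsZiminImage k w) : k ≤ ziminType w :=
  le_csSup (bddAbove_zimin w) h

lemma one_le_ziminType {w : List α} (hw : w ≠ []) : 1 ≤ ziminType w :=
  le_ziminType (isZiminImage_one hw)

end Aux

/-- Lemma 1 (recurrence for Zimin types of prefixes): for a nonempty word `x`
and `1 ≤ i ≤ |x|`, `Ztype[i] = 1 + Ztype[j]` where `j = |ShortBord(x[1..i])|`. -/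
theorem ziminType_prefix_recurrence {α : Type*} (x : List α) (hx : x ≠ [])
    (i : ℕ) (hi1 : 1 ≤ i) (hi2 : i ≤ x.length) :
    ziminType (x.take i) = 1 + ziminType (x.take (shortBordLen (x.take i))) := by
  set w : List α := x.take i with hwdef
  have hwlen : w.length = i := by
    simp [hwdef, List.length_take]; omega
  have hwne : w ≠ [] := by
    intro h
    rw [h] at hwlen
    simp at hwlen
    omega
  set j : ℕ := shortBordLen w with hjdef
  set S : Set ℕ := {j | w.take j <:+ w ∧ 2 * j < w.length} with hSdef
  have hSne : S.Nonempty := ⟨0, by simp [hSdef]; omega⟩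
  have hSbdd : BddAbove S := ⟨w.length, fun n hn => by
    have := hn.2; omega⟩
  have hjmem : j ∈ S := Nat.sSup_mem hSne hSbdd
  obtain ⟨hjsuf, hjlen⟩ := hjmem
  have hji : j < i := by omega
  set b : List α := w.take j with hbdef
  have hbw : x.take j = b := by
    rw [hbdef, hwdef, List.take_take, min_eq_left hji.le]
  have hblen : b.length = j := by
    simp [hbdef, List.length_take]; omega
  have hbpre : b <+: w := List.take_prefix j w
  have hbsuf : b <:+ w := hjsuf
  -- the key: a «b as zimin image wrapped» fact
  rw [hbw]
  -- direction ≥ : 1 + ziminType b ≤ ziminType w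
  have hge : 1 + ziminType b ≤ ziminType w := by
    have hib : IsZiminImage (ziminType b) b := by
      by_cases hb : b = []
      · have : ziminType b = 0 := by
          rw [hb]
          apply Nat.le_antisymm _ (Nat.zero_le _)
          by_cases hE : {k | IsZiminImage k ([] : List α)}.Nonempty
          · refine csSup_le hE fun n hn => ?_
            simp only [Set.mem_setOf_eq] at hn
            rcases n with _ | n
            · exact le_rfl
            · rw [isZiminImage_succ_iff] at hn
              obtain ⟨u, m, _, hm, hnil⟩ := hn
              exact absurd (List.append_eq_nil_iff.mp
                (List.append_eq_nil_iff.mp hnil.symm).1).2 hm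
          · rw [Set.not_nonempty_iff_eq_empty] at hE
            unfold ziminType
            rw [hE, csSup_empty]
            exact bot_le
        rw [this, hb]
        exact ⟨fun _ => w, fun _ => hwne, by simp [ziminWord]⟩
      · exact isZiminImage_ziminType hb
    have h2b : 2 * b.length < w.length := by omega
    obtain ⟨m, hm, hdec⟩ := exists_middle hbpre hbsuf h2b
    have : IsZiminImage (ziminType b + 1) w := by
      rw [isZiminImage_succ_iff]
      exact ⟨b, m, hib, hm, hdec⟩
    have := le_ziminType this
    omega
  -- direction ≤ : ziminType w ≤ 1 + ziminType b
  have hle : ziminType w ≤ 1 + ziminType b := by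
    obtain ⟨k, hk⟩ : ∃ k, ziminType w = k + 1 :=
      ⟨ziminType w - 1, by have := one_le_ziminType hwne; omega⟩
    have himg : IsZiminImage (k + 1) w := hk ▸ isZiminImage_ziminType hwne
    rw [isZiminImage_succ_iff] at himg
    obtain ⟨a, m, ha, hm, hdec⟩ := himg
    have hapre : a <+: w := ⟨m ++ a, by rw [hdec, List.append_assoc]⟩
    have hasuf : a <:+ w := ⟨a ++ m, hdec.symm⟩
    have halen : 2 * a.length < w.length := by
      have h1 : w.length = a.length + m.length + a.length := by
        rw [hdec, List.length_append, List.length_append]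
      have h2 : 1 ≤ m.length := List.length_pos_iff.mpr hm
      omega
    have hamem : a.length ∈ S := by
      constructor
      · rwa [← List.prefix_iff_eq_take.mp hapre]
      · exact halen
    have haj : a.length ≤ j := le_csSup hSbdd hamem
    have hapb : a <+: b := List.prefix_of_prefix_length_le hapre hbpre (by omega)
    have hasb : a <:+ b := List.suffix_of_suffix_length_le hasuf hbsuf (by omega)
    rcases k with _ | k'
    · omega
    · have : IsZiminImage (k' + 1) b := isZiminImage_of_border hapb hasb ha
      have := le_ziminType this
      omega
  omega
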